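/- Let g : ℝ → ℝ be defined by g(z) = z∫₀^{t₀} f'(z e^{β(θ)}) dθ − ∫₀^{t₀} f(z e^{β(θ)}) e^{−β(θ)} dθ, where f : ℝ → ℝ is C¹ and convex (so f' is nondecreasing) and β : [0,t₀] → ℝ is continuous. Then g is nondecreasing on [0,∞): for a ≥ a₁ ≥ 0, g(a) ≥ g(a₁). -/

import Mathlib

lemma key_phi (f : ℝ → ℝ) (hf : ContDiff ℝ 1 f) (hf' : Monotone (deriv f))
    {x y : ℝ} (hx : 0 ≤ x) (hxy : x ≤ y) :
    x * deriv f x - f x ≤ y * deriv f y - f y := by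
  rcases eq_or_lt_of_le hxy with rfl | hlt
  · exact le_refl _
  · obtain ⟨c, hc, hderiv⟩ := exists_deriv_eq_slope f hlt
      (hf.continuous.continuousOn) ((hf.differentiable one_ne_zero).differentiableOn)
    have h1 : deriv f c ≤ deriv f y := hf' (le_of_lt hc.2)
    have h2 : deriv f x ≤ deriv f y := hf' hxy
    have hslope : f y - f x = deriv f c * (y - x) := by
      rw [hderiv, div_mul_cancel₀ _ (sub_ne_zero.mpr hlt.ne')]
    nlinarith [mul_le_mul_of_nonneg_right h1 (sub_nonneg.mpr hxy)]

theorem stmt4 (f β g : ℝ → ℝ) (t₀ : ℝ) (ht : 0 < t₀)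
    (hf : ContDiff ℝ 1 f) (hf' : Monotone (deriv f)) (hβ : Continuous β)
    (hg : ∀ z : ℝ, g z = z * (∫ θ in (0:ℝ)..t₀, deriv f (z * Real.exp (β θ)))
      - ∫ θ in (0:ℝ)..t₀, f (z * Real.exp (β θ)) * Real.exp (-β θ)) :
    ∀ a a₁ : ℝ, 0 ≤ a₁ → a₁ ≤ a → g a₁ ≤ g a := by
  intro a a₁ ha₁ haa
  have hdc : Continuous (deriv f) := hf.continuous_deriv le_rfl
  have hfc : Continuous f := hf.continuous
  have hcont : ∀ z : ℝ, Continuous (fun θ =>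
      z * deriv f (z * Real.exp (β θ)) - f (z * Real.exp (β θ)) * Real.exp (-β θ)) := by
    intro z
    fun_prop
  have hint : ∀ z : ℝ, IntervalIntegrable (fun θ =>
      z * deriv f (z * Real.exp (β θ)) - f (z * Real.exp (β θ)) * Real.exp (-β θ))
      MeasureTheory.volume 0 t₀ := fun z => (hcont z).intervalIntegrable 0 t₀
  rw [hg a, hg a₁, ← intervalIntegral.integral_const_mul, ← intervalIntegral.integral_const_mul,
    ← intervalIntegral.integral_sub ((by fun_prop : Continuous fun θ =>
      a₁ * deriv f (a₁ * Real.exp (β θ))).intervalIntegrable 0 t₀)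
      ((by fun_prop : Continuous fun θ =>
      f (a₁ * Real.exp (β θ)) * Real.exp (-β θ)).intervalIntegrable 0 t₀),
    ← intervalIntegral.integral_sub ((by fun_prop : Continuous fun θ =>
      a * deriv f (a * Real.exp (β θ))).intervalIntegrable 0 t₀)
      ((by fun_prop : Continuous fun θ =>
      f (a * Real.exp (β θ)) * Real.exp (-β θ)).intervalIntegrable 0 t₀)]
  apply intervalIntegral.integral_mono_on ht.le (hint a₁) (hint a)
  intro θ _
  set l := Real.exp (β θ) with hl
  have hlpos : 0 < l := Real.exp_pos _
  have hxy : a₁ * l ≤ a * l := by nlinarith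
  have hx : 0 ≤ a₁ * l := by positivity
  have hkey := key_phi f hf hf' hx hxy
  have hinv : Real.exp (-β θ) = l⁻¹ := by rw [Real.exp_neg]
  rw [hinv]
  -- transform: z * f'(z*l) - f(z*l) * l⁻¹ = (z*l * f'(z*l) - f(z*l)) / l
  have e1 : ∀ z : ℝ, z * deriv f (z * l) - f (z * l) * l⁻¹
      = (z * l * deriv f (z * l) - f (z * l)) * l⁻¹ := by
    intro z; field_simp
  rw [e1 a, e1 a₁]
  exact mul_le_mul_of_nonneg_right hkey (by positivity)
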